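/- (Fourier transform of x^a_+ as a boundary value.) Let a ∈ ℂ with Re a > −1 and let φ ∈ 𝓢(ℝ,ℂ). Define Fφ(x) := ∫_{ξ ∈ ℝ} exp(−i·x·ξ) φ(ξ) dξ. Then ∫_{x ∈ (0,∞)} x^a · Fφ(x) dx (which converges absolutely) equals the limit lim_{η → 0⁺} Γ(a+1) · ∫_{ξ ∈ ℝ} (η + i·ξ)^{−a−1} φ(ξ) dξ; in particular this limit exists. -/

import Mathlib

open MeasureTheory Complex Set Filter
open scoped Real

private lemma measurable_ofReal_cpow (a : ℂ) : Measurable fun x : ℝ => (x : ℂ) ^ a := by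
  have h : (fun x : ℝ => (x : ℂ) ^ a) = fun x : ℝ =>
      if (x : ℂ) = 0 then (if a = 0 then 1 else 0) else Complex.exp (Complex.log x * a) := by
    funext x; rw [Complex.cpow_def]
  rw [h]
  exact Measurable.ite (Complex.measurable_ofReal (measurableSet_singleton 0))
    measurable_const ((Complex.measurable_ofReal.clog.mul_const a).cexp)

private lemma aux_bound_integrable {s b : ℝ} (hs : -1 < s) (hb : 0 < b) :
    IntegrableOn (fun x : ℝ => x ^ s * Real.exp (-b * x)) (Set.Ioi 0) := by
  have h := integrableOn_rpow_mul_exp_neg_mul_rpow (p := 1) hs one_pos hb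
  exact h.congr_fun (fun x hx => by simp only [Real.rpow_one]) measurableSet_Ioi

private lemma integrableOn_cpow_mul_exp {a : ℂ} (ha : -1 < a.re) {z : ℂ} (hz : 0 < z.re) :
    IntegrableOn (fun x : ℝ => (x : ℂ) ^ a * Complex.exp (-(z * x))) (Set.Ioi 0) := by
  have hmeas : AEStronglyMeasurable (fun x : ℝ => (x : ℂ) ^ a * Complex.exp (-(z * x)))
      (volume.restrict (Set.Ioi 0)) :=
    (((measurable_ofReal_cpow a).mul
      (((Complex.measurable_ofReal.const_mul z).neg).cexp))).aestronglyMeasurable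
  refine Integrable.mono' (aux_bound_integrable ha hz) hmeas ?_
  filter_upwards [ae_restrict_mem measurableSet_Ioi] with x hx
  rw [norm_mul,
    Complex.norm_cpow_eq_rpow_re_of_pos hx, Complex.norm_exp]
  apply le_of_eq
  congr 1
  simp [Complex.mul_re]

private lemma key_gamma_identity {a : ℂ} (ha : -1 < a.re) :
    ∀ z : ℂ, 0 < z.re →
      (∫ x : ℝ in Set.Ioi 0, (x : ℂ) ^ a * Complex.exp (-(z * x)))
        = Complex.Gamma (a + 1) * z ^ (-a - 1) := by
  set f : ℂ → ℂ := fun z => ∫ x : ℝ in Set.Ioi 0, (x : ℂ) ^ a * Complex.exp (-(z * x)) with hf_def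
  set g : ℂ → ℂ := fun z => Complex.Gamma (a + 1) * z ^ (-a - 1) with hg_def
  set U : Set ℂ := {z : ℂ | 0 < z.re} with hU_def
  have hUopen : IsOpen U := isOpen_lt continuous_const Complex.continuous_re
  have hUconn : IsPreconnected U := (convex_halfSpace_re_gt 0).isPreconnected
  -- differentiability of f
  have hfd : ∀ z₀ ∈ U, HasDerivAt f
      (∫ x : ℝ in Set.Ioi 0, (x : ℂ) ^ a * (Complex.exp (-(z₀ * x)) * -(x : ℂ))) z₀ := by
    intro z₀ hz₀
    have hz₀' : (0:ℝ) < z₀.re := hz₀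
    have hε : (0:ℝ) < z₀.re / 2 := by linarith
    have key := hasDerivAt_integral_of_dominated_loc_of_deriv_le (μ := volume.restrict (Set.Ioi 0))
      (F := fun (z : ℂ) (x : ℝ) => (x : ℂ) ^ a * Complex.exp (-(z * x)))
      (F' := fun (z : ℂ) (x : ℝ) => (x : ℂ) ^ a * (Complex.exp (-(z * x)) * -(x : ℂ)))
      (x₀ := z₀) (bound := fun x : ℝ => x ^ (a.re + 1) * Real.exp (-(z₀.re / 2) * x))
      (Metric.ball_mem_nhds z₀ hε) ?_ ?_ ?_ ?_ ?_ ?_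
    · exact key.2
    · refine Eventually.of_forall fun z => ?_
      exact (((measurable_ofReal_cpow a).mul
        (((Complex.measurable_ofReal.const_mul z).neg).cexp))).aestronglyMeasurable
    · exact integrableOn_cpow_mul_exp ha hz₀'
    · exact (((measurable_ofReal_cpow a).mul
        ((((Complex.measurable_ofReal.const_mul z₀).neg).cexp).mul
          Complex.measurable_ofReal.neg))).aestronglyMeasurable
    · filter_upwards [ae_restrict_mem measurableSet_Ioi] with x hx
      intro z hz
      have hzre : z₀.re / 2 ≤ z.re := by
        have := Complex.abs_re_le_norm (z - z₀)
        have hd : ‖z - z₀‖ < z₀.re / 2 := by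
          simpa [Metric.mem_ball, Complex.dist_eq] using hz
        have : |z.re - z₀.re| < z₀.re / 2 := by
          calc |z.re - z₀.re| = |(z - z₀).re| := by simp [Complex.sub_re]
            _ ≤ ‖z - z₀‖ := Complex.abs_re_le_norm _
            _ < z₀.re / 2 := hd
        have := abs_lt.mp this
        linarith [this.1]
      rw [norm_mul, norm_mul,
        Complex.norm_cpow_eq_rpow_re_of_pos hx, Complex.norm_exp]
      have h1 : (-(z * x)).re = -(z.re * x) := by simp [Complex.mul_re]
      rw [h1]
      have h2 : ‖-(x:ℂ)‖ = x := by
        simp [abs_of_pos (show (0:ℝ) < x from hx)]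
      rw [h2]
      have hr : x ^ (a.re + 1) = x ^ a.re * x := by
        rw [Real.rpow_add hx, Real.rpow_one]
      rw [hr]
      have hx' : (0:ℝ) < x := hx
      have hexp : Real.exp (-(z.re * x)) ≤ Real.exp (-(z₀.re / 2) * x) := by
        apply Real.exp_le_exp.mpr; nlinarith
      have hb : (0:ℝ) ≤ x ^ a.re * x := by positivity
      nlinarith [Real.exp_pos (-(z.re * x))]
    · exact aux_bound_integrable (by linarith) hε
    · filter_upwards [ae_restrict_mem measurableSet_Ioi] with x hx
      intro z hz
      have h1 : HasDerivAt (fun z : ℂ => -(z * x)) (-(x : ℂ)) z := by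
        exact (hasDerivAt_mul_const (x : ℂ)).neg
      exact (h1.cexp).const_mul ((x : ℂ) ^ a)
  have hf : AnalyticOnNhd ℂ f U := by
    refine DifferentiableOn.analyticOnNhd (fun z hz => ?_) hUopen
    exact ((hfd z hz).differentiableAt).differentiableWithinAt
  have hg : AnalyticOnNhd ℂ g U := by
    refine DifferentiableOn.analyticOnNhd (fun z hz => ?_) hUopen
    refine DifferentiableAt.differentiableWithinAt ?_
    exact ((differentiableAt_id.cpow (differentiableAt_const _) (Or.inl hz))).const_mul _
  -- equality on positive reals
  have hreal : ∀ r : ℝ, 0 < r → f r = g r := by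
    intro r hr
    have h := Complex.integral_cpow_mul_exp_neg_mul_Ioi
      (a := a + 1) (r := r) (by simp; linarith) hr
    simp only [add_sub_cancel_right] at h
    have harg : Complex.arg r ≠ π := by
      rw [Complex.arg_ofReal_of_nonneg hr.le]; exact fun h => Real.pi_ne_zero h.symm
    have h2 : ((1 : ℂ) / r) ^ (a + 1) = (r : ℂ) ^ (-a - 1) := by
      rw [one_div, Complex.inv_cpow _ _ harg, ← Complex.cpow_neg]
      congr 1
      ring
    simp only [hf_def, hg_def]
    rw [h, h2, mul_comm]
  intro z hz
  have h1U : (1:ℂ) ∈ U := by simp [hU_def]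
  have hseq : Filter.Tendsto (fun n : ℕ => ((1 + ((n:ℝ)+1)⁻¹ : ℝ) : ℂ)) atTop (nhdsWithin 1 {(1:ℂ)}ᶜ) := by
    rw [tendsto_nhdsWithin_iff]
    constructor
    · have h0 : Filter.Tendsto (fun n : ℕ => (1 + ((n:ℝ)+1)⁻¹ : ℝ)) atTop (nhds 1) := by
        have h1 := tendsto_one_div_add_atTop_nhds_zero_nat (𝕜 := ℝ)
        simp only [one_div] at h1
        simpa using h1.const_add 1
      have h3 := (Complex.continuous_ofReal.tendsto 1).comp h0
      simpa [Function.comp_def] using h3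
    · refine Eventually.of_forall fun n => ?_
      simp only [Set.mem_compl_iff, Set.mem_singleton_iff]
      intro hcon
      have h1 : (1 + ((n:ℝ)+1)⁻¹ : ℝ) = 1 := by exact_mod_cast hcon
      have h2 : ((n:ℝ)+1)⁻¹ = 0 := by linarith
      exact (by positivity : (0:ℝ) < ((n:ℝ)+1)⁻¹).ne' h2
  have hfreq : ∃ᶠ w in nhdsWithin 1 {(1:ℂ)}ᶜ, f w = g w :=
    hseq.frequently (Filter.Frequently.of_forall fun n => hreal _ (by positivity))
  exact hf.eqOn_of_preconnected_of_frequently_eq hg hUconn h1U hfreq hz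

/-- The Fourier transform of `x^a_+` as a boundary value: for `Re a > -1` and a Schwartz
function `φ`, the pairing `∫_0^∞ x^a (Fφ)(x) dx` equals the limit as `η → 0⁺` of
`Γ(a+1) ∫_ℝ (η + iξ)^{-a-1} φ(ξ) dξ`. -/
theorem fourier_cpow_pos_boundary_value (a : ℂ) (ha : -1 < a.re) (φ : SchwartzMap ℝ ℂ) :
    IntegrableOn (fun x : ℝ => (x : ℂ) ^ a *
      ∫ ξ : ℝ, Complex.exp (-(Complex.I * x * ξ)) * φ ξ) (Set.Ioi (0 : ℝ)) ∧
    Filter.Tendsto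
      (fun η : ℝ => Complex.Gamma (a + 1) *
        ∫ ξ : ℝ, ((η : ℂ) + Complex.I * ξ) ^ (-a - 1) * φ ξ)
      (nhdsWithin 0 (Set.Ioi 0))
      (nhds (∫ x in Set.Ioi (0 : ℝ), (x : ℂ) ^ a *
        ∫ ξ : ℝ, Complex.exp (-(Complex.I * x * ξ)) * φ ξ)) := by
  have hπ : (0:ℝ) < 2 * π := by positivity
  set ψ : SchwartzMap ℝ ℂ := SchwartzMap.fourierTransformCLM ℂ φ with hψdef
  -- the Fourier integral in the statement equals `ψ (x / (2π))`
  have hFeq : ∀ x : ℝ, (∫ ξ : ℝ, Complex.exp (-(Complex.I * x * ξ)) * φ ξ)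
      = ψ (x / (2 * π)) := by
    intro x
    have h1 : ψ (x / (2 * π))
        = ∫ v : ℝ, Complex.exp (↑(-2 * π * v * (x / (2 * π))) * Complex.I) • φ v := by
      rw [hψdef]
      have := congrFun (congrArg DFunLike.coe (SchwartzMap.fourierTransformCLM_apply (𝕜 := ℂ) φ)) (x / (2 * π))
      rw [this]
      exact Real.fourier_real_eq_integral_exp_smul (fun t => φ t) (x / (2 * π))
    rw [h1]
    refine integral_congr_ae (Eventually.of_forall fun ξ => ?_)
    dsimp only
    rw [smul_eq_mul]
    congr 1
    congr 1
    push_cast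
    have hπ' : (π : ℂ) ≠ 0 := by exact_mod_cast Real.pi_ne_zero
    field_simp
  have hcont : Continuous fun x : ℝ => ψ (x / (2 * π)) :=
    ψ.continuous.comp (continuous_id.div_const _)
  have hmeas0 : AEStronglyMeasurable (fun x : ℝ => (x : ℂ) ^ a * ψ (x / (2 * π)))
      (volume.restrict (Set.Ioi 0)) :=
    ((measurable_ofReal_cpow a).mul hcont.measurable).aestronglyMeasurable
  -- Part 1 : integrability
  have hP1 : IntegrableOn (fun x : ℝ => (x : ℂ) ^ a * ψ (x / (2 * π))) (Set.Ioi 0) := by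
    have hsplit : Set.Ioc (0:ℝ) 1 ∪ Set.Ioi (1:ℝ) = Set.Ioi 0 :=
      Set.Ioc_union_Ioi_eq_Ioi zero_le_one
    rw [← hsplit]
    refine IntegrableOn.union ?_ ?_
    · obtain ⟨C, hC⟩ := ψ.decay 0 0
      have hC' : ∀ y : ℝ, ‖ψ y‖ ≤ C := by
        intro y; simpa [norm_iteratedFDeriv_zero] using hC.2 y
      have hbint : IntegrableOn (fun x : ℝ => C * x ^ a.re) (Set.Ioc 0 1) := by
        have h := intervalIntegral.intervalIntegrable_rpow' (a := (0:ℝ)) (b := 1) ha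
        rw [intervalIntegrable_iff_integrableOn_Ioc_of_le zero_le_one] at h
        exact h.const_mul C
      refine Integrable.mono' hbint
        (hmeas0.mono_measure (Measure.restrict_mono Set.Ioc_subset_Ioi_self le_rfl)) ?_
      filter_upwards [ae_restrict_mem measurableSet_Ioc] with x hx
      rw [norm_mul, Complex.norm_cpow_eq_rpow_re_of_pos hx.1]
      calc x ^ a.re * ‖ψ (x / (2 * π))‖
          ≤ x ^ a.re * C := mul_le_mul_of_nonneg_left (hC' _) (Real.rpow_nonneg hx.1.le _)
        _ = C * x ^ a.re := mul_comm _ _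
    · set k : ℕ := ⌈a.re⌉₊ + 2 with hk_def
      have hkR : (k : ℝ) = (⌈a.re⌉₊ : ℝ) + 2 := by rw [hk_def]; push_cast; ring
      have hk : a.re - k < -1 := by
        have h1 : a.re ≤ (⌈a.re⌉₊ : ℝ) := Nat.le_ceil a.re
        rw [hkR]; linarith
      obtain ⟨C, hC⟩ := ψ.decay k 0
      have hC' : ∀ y : ℝ, ‖y‖ ^ k * ‖ψ y‖ ≤ C := by
        intro y; simpa [norm_iteratedFDeriv_zero] using hC.2 y
      have hbint : IntegrableOn (fun x : ℝ => (C * (2 * π) ^ k) * x ^ (a.re - k))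
          (Set.Ioi 1) := (integrableOn_Ioi_rpow_of_lt hk one_pos).const_mul _
      refine Integrable.mono' hbint
        (hmeas0.mono_measure (Measure.restrict_mono (Set.Ioi_subset_Ioi zero_le_one) le_rfl)) ?_
      filter_upwards [ae_restrict_mem measurableSet_Ioi] with x hx
      have hx1 : (1:ℝ) < x := hx
      have hx0 : (0:ℝ) < x := lt_trans one_pos hx1
      rw [norm_mul, Complex.norm_cpow_eq_rpow_re_of_pos hx0]
      have hy : (0:ℝ) < x / (2 * π) := by positivity
      have hψb : ‖ψ (x / (2 * π))‖ ≤ C * (2 * π) ^ k / x ^ k := by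
        have h := hC' (x / (2 * π))
        rw [Real.norm_eq_abs, abs_of_pos hy, div_pow, div_mul_eq_mul_div,
          div_le_iff₀ (by positivity)] at h
        rw [le_div_iff₀ (by positivity : (0:ℝ) < x ^ k)]
        calc ‖ψ (x / (2 * π))‖ * x ^ k = x ^ k * ‖ψ (x / (2 * π))‖ := mul_comm _ _
          _ ≤ C * (2 * π) ^ k := h
      calc x ^ a.re * ‖ψ (x / (2 * π))‖
          ≤ x ^ a.re * (C * (2 * π) ^ k / x ^ k) :=
            mul_le_mul_of_nonneg_left hψb (Real.rpow_nonneg hx0.le _)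
        _ = (C * (2 * π) ^ k) * x ^ (a.re - k) := by
            rw [Real.rpow_sub hx0, Real.rpow_natCast]
            ring
  -- Part 2 : the Γ-kernel identity after Fubini
  have part2 : ∀ η : ℝ, 0 < η →
      Complex.Gamma (a + 1) * (∫ ξ : ℝ, ((η : ℂ) + Complex.I * ξ) ^ (-a - 1) * φ ξ)
        = ∫ x in Set.Ioi (0:ℝ),
            ((x : ℂ) ^ a * Complex.exp (-((η : ℂ) * x))) * ψ (x / (2 * π)) := by
    intro η hη
    have hzre : ∀ ξ : ℝ, (0:ℝ) < ((η : ℂ) + Complex.I * ξ).re := by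
      intro ξ
      simpa [Complex.add_re, Complex.mul_re] using hη
    have hηre : (0:ℝ) < ((η : ℂ)).re := by simpa using hη
    have step1 : Complex.Gamma (a + 1) * (∫ ξ : ℝ, ((η : ℂ) + Complex.I * ξ) ^ (-a - 1) * φ ξ)
        = ∫ ξ : ℝ, ∫ x in Set.Ioi (0:ℝ),
            ((x : ℂ) ^ a * Complex.exp (-(((η : ℂ) + Complex.I * ξ) * x))) * φ ξ := by
      rw [← integral_const_mul]
      refine integral_congr_ae (Eventually.of_forall fun ξ => ?_)
      dsimp only
      rw [integral_mul_const, key_gamma_identity ha _ (hzre ξ)]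
      ring
    have hexp_eq : ∀ p : ℝ × ℝ,
        ‖Complex.exp (-(((η : ℂ) + Complex.I * p.1) * p.2))‖
          = ‖Complex.exp (-((η : ℂ) * p.2))‖ := by
      intro p
      rw [Complex.norm_exp, Complex.norm_exp]
      congr 1
      simp [Complex.mul_re, Complex.add_re, Complex.add_im]
    have hInt : Integrable (Function.uncurry fun (ξ : ℝ) (x : ℝ) =>
        ((x : ℂ) ^ a * Complex.exp (-(((η : ℂ) + Complex.I * ξ) * x))) * φ ξ)
        (volume.prod (volume.restrict (Set.Ioi 0))) := by
      have hprod : Integrable (fun p : ℝ × ℝ =>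
          ‖φ p.1‖ * ‖(p.2 : ℂ) ^ a * Complex.exp (-((η : ℂ) * p.2))‖)
          (volume.prod (volume.restrict (Set.Ioi 0))) :=
        (φ.integrable.norm).mul_prod (integrableOn_cpow_mul_exp ha hηre).norm
      refine hprod.mono' ?_ ?_
      · apply Measurable.aestronglyMeasurable
        refine Measurable.mul (Measurable.mul ?_ ?_) ?_
        · exact (measurable_ofReal_cpow a).comp measurable_snd
        · refine Measurable.cexp (Measurable.neg (Measurable.mul ?_ ?_))
          · exact measurable_const.add
              ((Complex.measurable_ofReal.comp measurable_fst).const_mul Complex.I)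
          · exact Complex.measurable_ofReal.comp measurable_snd
        · exact φ.continuous.measurable.comp measurable_fst
      · refine Eventually.of_forall fun p => ?_
        simp only [Function.uncurry]
        refine le_of_eq ?_
        calc ‖((p.2 : ℂ) ^ a * Complex.exp (-(((η : ℂ) + Complex.I * p.1) * p.2))) * φ p.1‖
            = ‖(p.2 : ℂ) ^ a‖ * ‖Complex.exp (-(((η : ℂ) + Complex.I * p.1) * p.2))‖
                * ‖φ p.1‖ := by rw [norm_mul, norm_mul]
          _ = ‖φ p.1‖ * (‖(p.2 : ℂ) ^ a‖ * ‖Complex.exp (-((η : ℂ) * p.2))‖) := by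
                rw [hexp_eq p]; ring
          _ = ‖φ p.1‖ * ‖(p.2 : ℂ) ^ a * Complex.exp (-((η : ℂ) * p.2))‖ := by
                rw [norm_mul]
    have step2 := integral_integral_swap hInt
    have step3 : ∀ x : ℝ, (∫ ξ : ℝ,
        ((x : ℂ) ^ a * Complex.exp (-(((η : ℂ) + Complex.I * ξ) * x))) * φ ξ)
        = ((x : ℂ) ^ a * Complex.exp (-((η : ℂ) * x)))
            * ∫ ξ : ℝ, Complex.exp (-(Complex.I * x * ξ)) * φ ξ := by
      intro x
      rw [← integral_const_mul]
      refine integral_congr_ae (Eventually.of_forall fun ξ => ?_)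
      dsimp only
      have hsplit : Complex.exp (-(((η : ℂ) + Complex.I * ξ) * x))
          = Complex.exp (-((η : ℂ) * x)) * Complex.exp (-(Complex.I * x * ξ)) := by
        rw [← Complex.exp_add]; congr 1; ring
      rw [hsplit]; ring
    rw [step1, step2]
    simp only [step3, hFeq]
  -- Part 3 : dominated convergence as η → 0⁺
  have part3 : Filter.Tendsto (fun η : ℝ => ∫ x in Set.Ioi (0:ℝ),
      ((x : ℂ) ^ a * Complex.exp (-((η : ℂ) * x))) * ψ (x / (2 * π)))
      (nhdsWithin 0 (Set.Ioi 0))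
      (nhds (∫ x in Set.Ioi (0:ℝ), (x : ℂ) ^ a * ψ (x / (2 * π)))) := by
    refine tendsto_integral_filter_of_dominated_convergence
      (fun x : ℝ => ‖(x : ℂ) ^ a * ψ (x / (2 * π))‖) ?_ ?_ hP1.norm ?_
    · refine Eventually.of_forall fun η => ?_
      exact (((measurable_ofReal_cpow a).mul
        (((Complex.measurable_ofReal.const_mul (η : ℂ)).neg).cexp)).mul
        hcont.measurable).aestronglyMeasurable
    · filter_upwards [self_mem_nhdsWithin] with η hη
      filter_upwards [ae_restrict_mem measurableSet_Ioi] with x hx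
      have hη' : (0:ℝ) < η := hη
      have hx' : (0:ℝ) < x := hx
      have h1 : ‖Complex.exp (-((η : ℂ) * x))‖ ≤ 1 := by
        rw [Complex.norm_exp]
        have h2 : (-((η : ℂ) * x)).re = -(η * x) := by simp [Complex.mul_re]
        rw [h2]
        have h3 : Real.exp (-(η * x)) ≤ Real.exp 0 :=
          Real.exp_le_exp.mpr (by nlinarith)
        simpa using h3
      rw [norm_mul, norm_mul, norm_mul]
      nlinarith [norm_nonneg ((x:ℂ) ^ a), norm_nonneg (ψ (x / (2 * π))),
        mul_nonneg (norm_nonneg ((x:ℂ) ^ a)) (norm_nonneg (ψ (x / (2 * π))))]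
    · refine Eventually.of_forall fun x => ?_
      have hc : Continuous fun η : ℝ =>
          ((x : ℂ) ^ a * Complex.exp (-((η : ℂ) * x))) * ψ (x / (2 * π)) := by
        refine Continuous.mul (Continuous.mul continuous_const ?_) continuous_const
        exact Complex.continuous_exp.comp
          ((Complex.continuous_ofReal.mul continuous_const).neg)
      have h4 := (hc.tendsto 0).mono_left (nhdsWithin_le_nhds (s := Set.Ioi (0:ℝ)))
      simpa using h4
  constructor
  · simp only [hFeq]; exact hP1
  · have hgoal : (∫ x in Set.Ioi (0:ℝ), (x : ℂ) ^ a *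
        ∫ ξ : ℝ, Complex.exp (-(Complex.I * x * ξ)) * φ ξ)
        = ∫ x in Set.Ioi (0:ℝ), (x : ℂ) ^ a * ψ (x / (2 * π)) := by
      simp only [hFeq]
    rw [hgoal]
    refine Filter.Tendsto.congr' ?_ part3
    filter_upwards [self_mem_nhdsWithin] with η hη
    exact (part2 η hη).symm
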